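/- Let K ≥ 0, let 0 ≤ λ < 1/2, and let G : ℝ → ℝ be a measurable, nonnegative function vanishing on (−∞,0) such that ∫₀^∞ G(t) dt = 1 and G(t) ≤ K · t^{−3/2} for all t > 0. Then for every t > 0, ∑_{n=1}^∞ (2λ)^n · G^{∗n}(t) ≤ K · (∑_{n=1}^∞ (2λ)^n n^{5/2}) · t^{−3/2}, where the constant ∑_{n=1}^∞ (2λ)^n n^{5/2} is finite. -/

import Mathlib

open Filter Set MeasureTheory

/-- Convolution of two functions vanishing on `(-∞,0)`:
`(f ∗ g)(t) = ∫₀ᵗ f(s) g(t-s) ds`. -/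
noncomputable def conv (f g : ℝ → ℝ) : ℝ → ℝ :=
  fun t => ∫ s in (0:ℝ)..t, f s * g (t - s)

/-- `convPow G n` is the `(n+1)`-st convolution power `G^{∗(n+1)}`:
`convPow G 0 = G` and `convPow G (n+1) = (convPow G n) ∗ G`. -/
noncomputable def convPow (G : ℝ → ℝ) : ℕ → ℝ → ℝ
  | 0 => G
  | n + 1 => conv (convPow G n) G

/- ### Auxiliary lemmas -/

lemma conv_of_neg {f g : ℝ → ℝ} (hzf : ∀ t < (0:ℝ), f t = 0)
    (hzg : ∀ t < (0:ℝ), g t = 0) {t : ℝ} (ht : t < 0) : conv f g t = 0 := by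
  have h : (fun s => f s * g (t - s)) = fun _ => (0:ℝ) := by
    funext s
    rcases lt_or_ge s 0 with hs | hs
    · rw [hzf s hs, zero_mul]
    · rw [hzg (t - s) (by linarith), mul_zero]
  simp only [conv, h, intervalIntegral.integral_const, smul_zero]

lemma conv_nonneg' {f g : ℝ → ℝ} (hf : ∀ t, 0 ≤ f t) (hg : ∀ t, 0 ≤ g t)
    (hzf : ∀ t < (0:ℝ), f t = 0) (hzg : ∀ t < (0:ℝ), g t = 0) (t : ℝ) :
    0 ≤ conv f g t := by
  rcases lt_or_ge t 0 with ht | ht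
  · rw [conv_of_neg hzf hzg ht]
  · exact intervalIntegral.integral_nonneg ht fun s _ => mul_nonneg (hf s) (hg _)

lemma conv_eq_toReal {f g : ℝ → ℝ} (hfm : Measurable f) (hgm : Measurable g)
    (hf : ∀ t, 0 ≤ f t) (hg : ∀ t, 0 ≤ g t) {t : ℝ} (ht : 0 ≤ t) :
    conv f g t
      = (∫⁻ s in Ioc (0:ℝ) t, ENNReal.ofReal (f s) * ENNReal.ofReal (g (t - s))).toReal := by
  rw [conv, intervalIntegral.integral_of_le ht,
    integral_eq_lintegral_of_nonneg_ae
      (Filter.Eventually.of_forall fun s => mul_nonneg (hf s) (hg _))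
      (by exact ((hfm.mul (hgm.comp (measurable_const.sub measurable_id))).aestronglyMeasurable))]
  congr 1
  refine lintegral_congr fun s => ?_
  exact ENNReal.ofReal_mul (hf s)

lemma conv_measurable {f g : ℝ → ℝ} (hfm : Measurable f) (hgm : Measurable g)
    (hzf : ∀ t < (0:ℝ), f t = 0) (hzg : ∀ t < (0:ℝ), g t = 0) :
    Measurable (conv f g) := by
  have hset : MeasurableSet {p : ℝ × ℝ | 0 < p.2 ∧ p.2 ≤ p.1} :=
    (measurableSet_lt measurable_const measurable_snd).inter
      (measurableSet_le measurable_snd measurable_fst)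
  have hφ : Measurable ({p : ℝ × ℝ | 0 < p.2 ∧ p.2 ≤ p.1}.indicator
      (fun p : ℝ × ℝ => f p.2 * g (p.1 - p.2))) :=
    ((hfm.comp measurable_snd).mul (hgm.comp (measurable_fst.sub measurable_snd))).indicator hset
  have key : conv f g = fun t => ∫ s,
      ({p : ℝ × ℝ | 0 < p.2 ∧ p.2 ≤ p.1}.indicator
        (fun p : ℝ × ℝ => f p.2 * g (p.1 - p.2))) (t, s) := by
    funext t
    rcases lt_or_ge t 0 with ht | ht
    · rw [conv_of_neg hzf hzg ht]
      have : ∀ s : ℝ, ({p : ℝ × ℝ | 0 < p.2 ∧ p.2 ≤ p.1}.indicator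
          (fun p : ℝ × ℝ => f p.2 * g (p.1 - p.2))) (t, s) = 0 := by
        intro s
        apply Set.indicator_of_notMem
        rintro ⟨h1, h2⟩
        exact absurd (h1.trans_le h2) (not_lt.2 ht.le)
      simp [this]
    · have : ∀ s : ℝ, ({p : ℝ × ℝ | 0 < p.2 ∧ p.2 ≤ p.1}.indicator
          (fun p : ℝ × ℝ => f p.2 * g (p.1 - p.2))) (t, s)
          = (Ioc (0:ℝ) t).indicator (fun s => f s * g (t - s)) s := by
        intro s
        by_cases hs : s ∈ Ioc (0:ℝ) t
        · rw [Set.indicator_of_mem hs, Set.indicator_of_mem (by exact ⟨hs.1, hs.2⟩)]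
        · rw [Set.indicator_of_notMem hs, Set.indicator_of_notMem (by exact hs)]
      simp only [this]
      rw [MeasureTheory.integral_indicator measurableSet_Ioc, conv,
        intervalIntegral.integral_of_le ht]
  rw [key]
  exact (hφ.stronglyMeasurable.integral_prod_right').measurable

lemma lintegral_shift_Ici (g : ℝ → ℝ) (s : ℝ) :
    ∫⁻ t in Ici s, ENNReal.ofReal (g (t - s)) = ∫⁻ u in Ici (0:ℝ), ENNReal.ofReal (g u) := by
  have h := (measurePreserving_add_right (volume : Measure ℝ) s).setLIntegral_comp_emb
    (measurableEmbedding_addRight s) (fun t => ENNReal.ofReal (g (t - s))) (Ici 0)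
  simp only [add_sub_cancel_right, Set.image_add_const_Ici, zero_add] at h
  exact h.symm

lemma lintegral_refl_Ioc (g : ℝ → ℝ) (a t : ℝ) :
    ∫⁻ s in Ioc a t, ENNReal.ofReal (g (t - s))
      = ∫⁻ u in Ico (t - t) (t - a), ENNReal.ofReal (g u) := by
  have h := (Measure.measurePreserving_sub_left (volume : Measure ℝ) t).setLIntegral_comp_emb
    (MeasurableEquiv.subLeft t).measurableEmbedding (fun u => ENNReal.ofReal (g u)) (Ioc a t)
  rw [h, Set.image_const_sub_Ioc]

lemma lintegral_Ici_zero_eq (g : ℝ → ℝ) :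
    ∫⁻ u in Ici (0:ℝ), ENNReal.ofReal (g u) = ∫⁻ u in Ioi (0:ℝ), ENNReal.ofReal (g u) := by
  rw [MeasureTheory.restrict_Ioi_eq_restrict_Ici]

lemma lintegral_conv_le {f g : ℝ → ℝ} (hfm : Measurable f) (hgm : Measurable g)
    (hf : ∀ t, 0 ≤ f t) (hg : ∀ t, 0 ≤ g t)
    (hfi : ∫⁻ t in Ioi (0:ℝ), ENNReal.ofReal (f t) ≤ 1)
    (hgi : ∫⁻ t in Ioi (0:ℝ), ENNReal.ofReal (g t) ≤ 1) :
    ∫⁻ t in Ioi (0:ℝ), ENNReal.ofReal (conv f g t) ≤ 1 := by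
  set ψ : ℝ → ℝ → ENNReal := fun t s =>
    {p : ℝ × ℝ | 0 < p.2 ∧ p.2 ≤ p.1}.indicator
      (fun p : ℝ × ℝ => ENNReal.ofReal (f p.2) * ENNReal.ofReal (g (p.1 - p.2))) (t, s) with hψ
  have hset : MeasurableSet {p : ℝ × ℝ | 0 < p.2 ∧ p.2 ≤ p.1} :=
    (measurableSet_lt measurable_const measurable_snd).inter
      (measurableSet_le measurable_snd measurable_fst)
  have hψm : Measurable (Function.uncurry ψ) := by
    apply Measurable.indicator _ hset
    exact ((ENNReal.measurable_ofReal.comp (hfm.comp measurable_snd)).mul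
      (ENNReal.measurable_ofReal.comp (hgm.comp (measurable_fst.sub measurable_snd))))
  have step1 : ∀ t ∈ Ioi (0:ℝ), ENNReal.ofReal (conv f g t) ≤ ∫⁻ s, ψ t s := by
    intro t ht
    have h1 : ∀ s : ℝ, ψ t s
        = (Ioc (0:ℝ) t).indicator
            (fun s => ENNReal.ofReal (f s) * ENNReal.ofReal (g (t - s))) s := by
      intro s
      simp only [hψ]
      by_cases h : s ∈ Ioc (0:ℝ) t
      · rw [Set.indicator_of_mem h]
        exact Set.indicator_of_mem
          (show (t, s) ∈ {p : ℝ × ℝ | 0 < p.2 ∧ p.2 ≤ p.1} from ⟨h.1, h.2⟩) _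
      · rw [Set.indicator_of_notMem h]
        exact Set.indicator_of_notMem
          (show (t, s) ∉ {p : ℝ × ℝ | 0 < p.2 ∧ p.2 ≤ p.1} from h) _
    rw [conv_eq_toReal hfm hgm hf hg (le_of_lt ht), lintegral_congr h1,
      lintegral_indicator measurableSet_Ioc]
    exact ENNReal.ofReal_toReal_le
  calc ∫⁻ t in Ioi (0:ℝ), ENNReal.ofReal (conv f g t)
      ≤ ∫⁻ t in Ioi (0:ℝ), ∫⁻ s, ψ t s := by
        refine setLIntegral_mono (Measurable.lintegral_prod_right hψm) step1
    _ ≤ ∫⁻ t, ∫⁻ s, ψ t s := setLIntegral_le_lintegral _ _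
    _ = ∫⁻ s, ∫⁻ t, ψ t s := lintegral_lintegral_swap hψm.aemeasurable
    _ ≤ ∫⁻ s, (Ioi (0:ℝ)).indicator (fun s => ENNReal.ofReal (f s)) s := by
        refine lintegral_mono fun s => ?_
        by_cases hs : 0 < s
        · have h2 : ∀ t, ψ t s
              = (Ici s).indicator
                  (fun t => ENNReal.ofReal (f s) * ENNReal.ofReal (g (t - s))) t := by
            intro t
            simp only [hψ]
            by_cases h : t ∈ Ici s
            · rw [Set.indicator_of_mem h]
              exact Set.indicator_of_mem
                (show (t, s) ∈ {p : ℝ × ℝ | 0 < p.2 ∧ p.2 ≤ p.1} from ⟨hs, h⟩) _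
            · rw [Set.indicator_of_notMem h]
              exact Set.indicator_of_notMem
                (show (t, s) ∉ {p : ℝ × ℝ | 0 < p.2 ∧ p.2 ≤ p.1} from fun hc => h hc.2) _
          rw [lintegral_congr h2, lintegral_indicator measurableSet_Ici,
            lintegral_const_mul _ (by
              exact ENNReal.measurable_ofReal.comp
                (hgm.comp (measurable_id.sub measurable_const))),
            lintegral_shift_Ici g s, lintegral_Ici_zero_eq g,
            Set.indicator_of_mem (mem_Ioi.2 hs)]
          calc ENNReal.ofReal (f s) * ∫⁻ u in Ioi (0:ℝ), ENNReal.ofReal (g u)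
              ≤ ENNReal.ofReal (f s) * 1 := mul_le_mul_right hgi _
            _ = ENNReal.ofReal (f s) := mul_one _
        · have h2 : ∀ t, ψ t s = 0 := by
            intro t
            simp only [hψ]
            exact Set.indicator_of_notMem
              (show (t, s) ∉ {p : ℝ × ℝ | 0 < p.2 ∧ p.2 ≤ p.1} from fun hc => hs hc.1) _
          rw [lintegral_congr h2, lintegral_zero]
          exact zero_le
    _ = ∫⁻ s in Ioi (0:ℝ), ENNReal.ofReal (f s) := lintegral_indicator measurableSet_Ioi _
    _ ≤ 1 := hfi

lemma conv_le_split {f g : ℝ → ℝ} (hfm : Measurable f) (hgm : Measurable g)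
    (hf : ∀ t, 0 ≤ f t) (hg : ∀ t, 0 ≤ g t)
    (hfi : ∫⁻ t in Ioi (0:ℝ), ENNReal.ofReal (f t) ≤ 1)
    (hgi : ∫⁻ t in Ioi (0:ℝ), ENNReal.ofReal (g t) ≤ 1)
    {A B : ℝ} (hA : 0 ≤ A) (hB : 0 ≤ B)
    (hfb : ∀ s, 0 < s → f s ≤ A * s ^ (-(3:ℝ)/2))
    (hgb : ∀ s, 0 < s → g s ≤ B * s ^ (-(3:ℝ)/2))
    {t a : ℝ} (h0 : 0 < a) (hat : a < t) :
    conv f g t ≤ B * (t - a) ^ (-(3:ℝ)/2) + A * a ^ (-(3:ℝ)/2) := by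
  have ht : (0:ℝ) ≤ t := le_of_lt (h0.trans hat)
  have hta : (0:ℝ) < t - a := by linarith
  have hexp : (-(3:ℝ)/2) ≤ 0 := by norm_num
  set c1 := B * (t - a) ^ (-(3:ℝ)/2) with hc1def
  set c2 := A * a ^ (-(3:ℝ)/2) with hc2def
  have hc1 : 0 ≤ c1 := mul_nonneg hB (Real.rpow_nonneg hta.le _)
  have hc2 : 0 ≤ c2 := mul_nonneg hA (Real.rpow_nonneg h0.le _)
  rw [conv_eq_toReal hfm hgm hf hg ht]
  apply ENNReal.toReal_le_of_le_ofReal (by linarith)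
  have hsplit : Ioc (0:ℝ) t = Ioc 0 a ∪ Ioc a t := (Set.Ioc_union_Ioc_eq_Ioc h0.le hat.le).symm
  rw [hsplit, lintegral_union measurableSet_Ioc (Set.Ioc_disjoint_Ioc_of_le le_rfl),
    ENNReal.ofReal_add hc1 hc2]
  have hgm' : Measurable fun s : ℝ => ENNReal.ofReal (g (t - s)) :=
    ENNReal.measurable_ofReal.comp (hgm.comp (measurable_const.sub measurable_id))
  have hfm' : Measurable fun s : ℝ => ENNReal.ofReal (f s) :=
    ENNReal.measurable_ofReal.comp hfm
  have I1 : (∫⁻ s in Ioc (0:ℝ) a, ENNReal.ofReal (f s) * ENNReal.ofReal (g (t - s)))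
      ≤ ENNReal.ofReal c1 := by
    calc (∫⁻ s in Ioc (0:ℝ) a, ENNReal.ofReal (f s) * ENNReal.ofReal (g (t - s)))
        ≤ ∫⁻ s in Ioc (0:ℝ) a, ENNReal.ofReal c1 * ENNReal.ofReal (f s) := by
          refine setLIntegral_mono (measurable_const.mul hfm') fun s hs => ?_
          rw [mul_comm]
          refine mul_le_mul' (ENNReal.ofReal_le_ofReal ?_) le_rfl
          have hts : (0:ℝ) < t - s := by have := hs.2; linarith
          calc g (t - s) ≤ B * (t - s) ^ (-(3:ℝ)/2) := hgb _ hts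
            _ ≤ c1 := by
                rw [hc1def]
                refine mul_le_mul_of_nonneg_left ?_ hB
                exact Real.rpow_le_rpow_of_nonpos hta (by linarith [hs.2]) hexp
      _ = ENNReal.ofReal c1 * ∫⁻ s in Ioc (0:ℝ) a, ENNReal.ofReal (f s) :=
          lintegral_const_mul _ hfm'
      _ ≤ ENNReal.ofReal c1 * 1 :=
          mul_le_mul_right ((lintegral_mono_set Set.Ioc_subset_Ioi_self).trans hfi) _
      _ = ENNReal.ofReal c1 := mul_one _
  have I2 : (∫⁻ s in Ioc a t, ENNReal.ofReal (f s) * ENNReal.ofReal (g (t - s)))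
      ≤ ENNReal.ofReal c2 := by
    calc (∫⁻ s in Ioc a t, ENNReal.ofReal (f s) * ENNReal.ofReal (g (t - s)))
        ≤ ∫⁻ s in Ioc a t, ENNReal.ofReal c2 * ENNReal.ofReal (g (t - s)) := by
          refine setLIntegral_mono (measurable_const.mul hgm') fun s hs => ?_
          refine mul_le_mul' (ENNReal.ofReal_le_ofReal ?_) le_rfl
          have hs0 : (0:ℝ) < s := h0.trans hs.1
          calc f s ≤ A * s ^ (-(3:ℝ)/2) := hfb _ hs0
            _ ≤ c2 := by
                rw [hc2def]
                refine mul_le_mul_of_nonneg_left ?_ hA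
                exact Real.rpow_le_rpow_of_nonpos h0 hs.1.le hexp
      _ = ENNReal.ofReal c2 * ∫⁻ s in Ioc a t, ENNReal.ofReal (g (t - s)) :=
          lintegral_const_mul _ hgm'
      _ ≤ ENNReal.ofReal c2 * 1 := by
          refine mul_le_mul_right ?_ _
          rw [lintegral_refl_Ioc g a t]
          refine le_trans (lintegral_mono_set ?_)
            (le_trans (le_of_eq (lintegral_Ici_zero_eq g)) hgi)
          rw [sub_self]
          exact Set.Ico_subset_Ici_self
      _ = ENNReal.ofReal c2 := mul_one _
  exact add_le_add I1 I2

lemma split_arith {K t : ℝ} (ht : 0 < t) (n : ℕ) :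
    K * (t - ((n:ℝ)+1)/((n:ℝ)+2) * t) ^ (-(3:ℝ)/2)
      + (K * ((n:ℝ)+1) ^ ((5:ℝ)/2)) * (((n:ℝ)+1)/((n:ℝ)+2) * t) ^ (-(3:ℝ)/2)
      = K * ((n:ℝ)+2) ^ ((5:ℝ)/2) * t ^ (-(3:ℝ)/2) := by
  set b : ℝ := (n:ℝ) + 1 with hbdef
  set c : ℝ := (n:ℝ) + 2 with hcdef
  have hb : (0:ℝ) < b := by positivity
  have hc : (0:ℝ) < c := by positivity
  have hdiv : ∀ x : ℝ, 0 < x → (x/c) ^ (-(3:ℝ)/2) = x ^ (-(3:ℝ)/2) * c ^ ((3:ℝ)/2) := by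
    intro x hx
    have hinv : (c ^ (-(3:ℝ)/2))⁻¹ = c ^ ((3:ℝ)/2) := by
      rw [← Real.rpow_neg hc.le]
      norm_num
    rw [Real.div_rpow hx.le hc.le, div_eq_mul_inv, ← hinv]
  have h1 : t - b/c * t = t/c := by
    rw [hbdef, hcdef]
    field_simp
    ring
  have e1 : (t/c) ^ (-(3:ℝ)/2) = t ^ (-(3:ℝ)/2) * c ^ ((3:ℝ)/2) := hdiv t ht
  have e2 : (b/c*t) ^ (-(3:ℝ)/2)
      = b ^ (-(3:ℝ)/2) * (t ^ (-(3:ℝ)/2) * c ^ ((3:ℝ)/2)) := by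
    rw [show b/c*t = (b*t)/c by ring, hdiv (b*t) (by positivity),
      Real.mul_rpow hb.le ht.le]
    ring
  have e3 : b ^ ((5:ℝ)/2) * b ^ (-(3:ℝ)/2) = b := by
    rw [← Real.rpow_add hb]
    norm_num
  have e4 : c ^ ((3:ℝ)/2) * c = c ^ ((5:ℝ)/2) := by
    nth_rewrite 1 [show c ^ ((5:ℝ)/2) = c ^ ((3:ℝ)/2 + 1) by norm_num]
    rw [Real.rpow_add hc, Real.rpow_one]
  have hbc : 1 + b = c := by rw [hbdef, hcdef]; ring
  calc K * (t - b/c * t) ^ (-(3:ℝ)/2)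
        + (K * b ^ ((5:ℝ)/2)) * (b/c*t) ^ (-(3:ℝ)/2)
      = K * (t ^ (-(3:ℝ)/2) * c ^ ((3:ℝ)/2)) * (1 + b ^ ((5:ℝ)/2) * b ^ (-(3:ℝ)/2)) := by
        rw [h1, e1, e2]; ring
    _ = K * (t ^ (-(3:ℝ)/2) * c ^ ((3:ℝ)/2)) * c := by rw [e3, hbc]
    _ = K * c ^ ((5:ℝ)/2) * t ^ (-(3:ℝ)/2) := by rw [← e4]; ring

lemma convPow_props {K : ℝ} (hK : 0 ≤ K) {G : ℝ → ℝ} (hm : Measurable G)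
    (hnn : ∀ t, 0 ≤ G t) (hz : ∀ t < (0:ℝ), G t = 0)
    (hint : ∫⁻ t in Ioi (0:ℝ), ENNReal.ofReal (G t) ≤ 1)
    (hb : ∀ t, 0 < t → G t ≤ K * t ^ (-(3:ℝ)/2)) : ∀ n : ℕ,
    Measurable (convPow G n) ∧ (∀ t, 0 ≤ convPow G n t) ∧ (∀ t < (0:ℝ), convPow G n t = 0) ∧
    (∫⁻ t in Ioi (0:ℝ), ENNReal.ofReal (convPow G n t) ≤ 1) ∧
    ∀ t, 0 < t → convPow G n t ≤ (K * ((n:ℝ)+1) ^ ((5:ℝ)/2)) * t ^ (-(3:ℝ)/2) := by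
  intro n
  induction n with
  | zero =>
    refine ⟨hm, hnn, hz, hint, fun t ht => ?_⟩
    simpa [Real.one_rpow, convPow] using hb t ht
  | succ n ih =>
    obtain ⟨ihm, ihnn, ihz, ihint, ihb⟩ := ih
    refine ⟨conv_measurable ihm hm ihz hz, conv_nonneg' ihnn hnn ihz hz,
      fun t hlt => conv_of_neg ihz hz hlt,
      lintegral_conv_le ihm hm ihnn hnn ihint hint, ?_⟩
    intro t ht
    set a : ℝ := ((n:ℝ)+1)/((n:ℝ)+2) * t with hadef
    have h0a : 0 < a := by positivity
    have hfrac : ((n:ℝ)+1)/((n:ℝ)+2) < 1 := by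
      rw [div_lt_one (by positivity)]
      linarith
    have hat : a < t := by
      calc a = ((n:ℝ)+1)/((n:ℝ)+2) * t := hadef
        _ < 1 * t := mul_lt_mul_of_pos_right hfrac ht
        _ = t := one_mul t
    have hstep := conv_le_split ihm hm ihnn hnn ihint hint
      (A := K * ((n:ℝ)+1) ^ ((5:ℝ)/2)) (B := K)
      (by positivity) hK ihb hb h0a hat
    have harith := split_arith (K := K) ht n
    calc conv (convPow G n) G t
        ≤ K * (t - a) ^ (-(3:ℝ)/2)
          + (K * ((n:ℝ)+1) ^ ((5:ℝ)/2)) * a ^ (-(3:ℝ)/2) := hstep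
      _ = K * ((n:ℝ)+2) ^ ((5:ℝ)/2) * t ^ (-(3:ℝ)/2) := by rw [hadef]; exact harith
      _ = K * (((n+1:ℕ):ℝ)+1) ^ ((5:ℝ)/2) * t ^ (-(3:ℝ)/2) := by
          have hcast : (((n+1:ℕ):ℝ)+1) = (n:ℝ)+2 := by push_cast; ring
          rw [hcast]

/-- Lemma 3.8 ('Expected number of dual 3-paths'), analytic form: for `0 ≤ λ < 1/2`,
`∑_{n=1}^∞ (2λ)^n G^{∗n}(t) ≤ K (∑_{n=1}^∞ (2λ)^n n^{5/2}) t^{-3/2}`, where the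
constant series is finite (here `convPow G n = G^{∗(n+1)}`). -/
theorem sum_convolution_powers_bound (K lam : ℝ) (hK : 0 ≤ K)
    (h0 : 0 ≤ lam) (h1 : lam < 1/2)
    (G : ℝ → ℝ) (hm : Measurable G) (hnn : ∀ t, 0 ≤ G t)
    (hz : ∀ t < (0:ℝ), G t = 0)
    (hint : ∫⁻ t in Ioi (0:ℝ), ENNReal.ofReal (G t) = 1)
    (hb : ∀ t, 0 < t → G t ≤ K * t ^ (-(3:ℝ)/2)) :
    Summable (fun n : ℕ => (2 * lam) ^ (n + 1) * ((n + 1 : ℕ) : ℝ) ^ ((5:ℝ)/2)) ∧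
    ∀ t : ℝ, 0 < t →
      (∑' n : ℕ, (2 * lam) ^ (n + 1) * convPow G n t) ≤
        K * (∑' n : ℕ, (2 * lam) ^ (n + 1) * ((n + 1 : ℕ) : ℝ) ^ ((5:ℝ)/2)) *
          t ^ (-(3:ℝ)/2) := by
  set r : ℝ := 2 * lam with hrdef
  have hr0 : 0 ≤ r := by rw [hrdef]; linarith
  have hr1 : r < 1 := by rw [hrdef]; linarith
  have hmaj : Summable (fun n : ℕ => ((n + 1 : ℕ) : ℝ) ^ (3:ℕ) * r ^ (n + 1)) := by
    have h := summable_pow_mul_geometric_of_norm_lt_one (R := ℝ) 3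
      (r := r) (by rw [Real.norm_eq_abs, abs_of_nonneg hr0]; exact hr1)
    exact (summable_nat_add_iff (f := fun m : ℕ => ((m:ℕ):ℝ) ^ (3:ℕ) * r ^ m) 1).mpr h
  have hterm : ∀ n : ℕ, r ^ (n + 1) * ((n + 1 : ℕ) : ℝ) ^ ((5:ℝ)/2)
      ≤ ((n + 1 : ℕ) : ℝ) ^ (3:ℕ) * r ^ (n + 1) := by
    intro n
    rw [mul_comm]
    refine mul_le_mul_of_nonneg_right ?_ (pow_nonneg hr0 _)
    have h1' : (1:ℝ) ≤ ((n + 1 : ℕ) : ℝ) := by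
      push_cast
      linarith [(Nat.cast_nonneg n : (0:ℝ) ≤ (n:ℝ))]
    calc ((n + 1 : ℕ) : ℝ) ^ ((5:ℝ)/2)
        ≤ ((n + 1 : ℕ) : ℝ) ^ ((3:ℕ):ℝ) :=
          Real.rpow_le_rpow_of_exponent_le h1' (by norm_num)
      _ = ((n + 1 : ℕ) : ℝ) ^ (3:ℕ) := Real.rpow_natCast _ 3
  have htermnn : ∀ n : ℕ, 0 ≤ r ^ (n + 1) * ((n + 1 : ℕ) : ℝ) ^ ((5:ℝ)/2) :=
    fun n => mul_nonneg (pow_nonneg hr0 _) (Real.rpow_nonneg (Nat.cast_nonneg _) _)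
  have hS : Summable (fun n : ℕ => r ^ (n + 1) * ((n + 1 : ℕ) : ℝ) ^ ((5:ℝ)/2)) :=
    Summable.of_nonneg_of_le htermnn hterm hmaj
  refine ⟨hS, ?_⟩
  intro t ht
  have hP := convPow_props hK hm hnn hz (le_of_eq hint) hb
  have hle : ∀ n : ℕ, r ^ (n + 1) * convPow G n t
      ≤ K * t ^ (-(3:ℝ)/2) * (r ^ (n + 1) * ((n + 1 : ℕ) : ℝ) ^ ((5:ℝ)/2)) := by
    intro n
    have hb' := (hP n).2.2.2.2 t ht
    calc r ^ (n + 1) * convPow G n t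
        ≤ r ^ (n + 1) * ((K * ((n:ℝ)+1) ^ ((5:ℝ)/2)) * t ^ (-(3:ℝ)/2)) :=
          mul_le_mul_of_nonneg_left hb' (pow_nonneg hr0 _)
      _ = K * t ^ (-(3:ℝ)/2) * (r ^ (n + 1) * ((n + 1 : ℕ) : ℝ) ^ ((5:ℝ)/2)) := by
          push_cast
          ring
  have hnn' : ∀ n : ℕ, 0 ≤ r ^ (n + 1) * convPow G n t :=
    fun n => mul_nonneg (pow_nonneg hr0 _) ((hP n).2.1 t)
  have hSg : Summable (fun n : ℕ =>
      K * t ^ (-(3:ℝ)/2) * (r ^ (n + 1) * ((n + 1 : ℕ) : ℝ) ^ ((5:ℝ)/2))) :=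
    hS.mul_left _
  have hSL : Summable (fun n : ℕ => r ^ (n + 1) * convPow G n t) :=
    Summable.of_nonneg_of_le hnn' hle hSg
  calc (∑' n : ℕ, r ^ (n + 1) * convPow G n t)
      ≤ ∑' n : ℕ, K * t ^ (-(3:ℝ)/2) * (r ^ (n + 1) * ((n + 1 : ℕ) : ℝ) ^ ((5:ℝ)/2)) :=
        Summable.tsum_le_tsum hle hSL hSg
    _ = K * t ^ (-(3:ℝ)/2) * ∑' n : ℕ, r ^ (n + 1) * ((n + 1 : ℕ) : ℝ) ^ ((5:ℝ)/2) :=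
        tsum_mul_left
    _ = K * (∑' n : ℕ, r ^ (n + 1) * ((n + 1 : ℕ) : ℝ) ^ ((5:ℝ)/2)) * t ^ (-(3:ℝ)/2) := by
        ring
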